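/- Let A be a real symmetric positive definite d×d matrix with positive semidefinite square root A^{1/2}, let b ∈ ℝ^d, and let F(x) = (1/2)·xᵀAx − bᵀx, so ∇F(x) = Ax − b. Let 0 < π < 1, let H be a real symmetric positive definite d×d matrix satisfying (1 − π)·A⁻¹ ⪯ H⁻¹ ⪯ A⁻¹ in the Loewner order, and set θ = (1 − √(1 − π))/(1 + √(1 − π)). From arbitrary initial points x⁽⁰⁾, x⁽¹⁾ ∈ ℝ^d define the sequence y⁽ᵗ⁺¹⁾ = (1+θ)·x⁽ᵗ⁾ − θ·x⁽ᵗ⁻¹⁾, x⁽ᵗ⁺¹⁾ = y⁽ᵗ⁺¹⁾ − H⁻¹∇F(y⁽ᵗ⁺¹⁾) for t ≥ 1. Then for every ρ with 1 − √(1 − π) < ρ < 1 there exists a constant C > 0 such that for all t ≥ 1, √( ‖A^{-1/2}∇F(x⁽ᵗ⁺¹⁾)‖² + ‖A^{-1/2}∇F(x⁽ᵗ⁾)‖² ) ≤ C·ρᵗ·√( ‖A^{-1/2}∇F(x⁽¹⁾)‖² + ‖A^{-1/2}∇F(x⁽⁰⁾)‖² ). -/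

import Mathlib

set_option maxHeartbeats 1000000

open Finset

/-- power-sum sequence of `z` and `conj z` -/
noncomputable def hseq (z : ℂ) (t : ℕ) : ℂ :=
  ∑ j ∈ Finset.range (t+1), z^j * (starRingEnd ℂ z)^(t-j)

lemma hseq_zero (z : ℂ) : hseq z 0 = 1 := by simp [hseq]

lemma hseq_one (z : ℂ) : hseq z 1 = z + starRingEnd ℂ z := by
  simp [hseq, Finset.sum_range_succ]; ring

lemma hseq_succ (z : ℂ) (t : ℕ) :
    hseq z (t+1) = z * hseq z t + (starRingEnd ℂ z)^(t+1) := by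
  rw [hseq, Finset.sum_range_succ' (fun j => z^j * (starRingEnd ℂ z)^(t+1-j))]
  simp only [pow_zero, one_mul, Nat.sub_zero]
  rw [hseq, Finset.mul_sum]
  congr 1
  refine Finset.sum_congr rfl fun j hj => ?_
  rw [Finset.mem_range] at hj
  rw [pow_succ']
  have : t + 1 - (j + 1) = t - j := by omega
  rw [this]; ring

lemma hseq_succ' (z : ℂ) (t : ℕ) :
    hseq z (t+1) = starRingEnd ℂ z * hseq z t + z^(t+1) := by
  rw [hseq, Finset.sum_range_succ]
  simp only [Nat.sub_self, pow_zero, mul_one]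
  rw [hseq, Finset.mul_sum]
  congr 1
  refine Finset.sum_congr rfl fun j hj => ?_
  rw [Finset.mem_range] at hj
  have : t + 1 - j = (t - j) + 1 := by omega
  rw [this, pow_succ]; ring

lemma hseq_rec (z : ℂ) (t : ℕ) :
    hseq z (t+2) = (z + starRingEnd ℂ z) * hseq z (t+1) - z * starRingEnd ℂ z * hseq z t := by
  have h1 := hseq_succ z (t+1)
  have h2 := hseq_succ' z t
  have h3 := hseq_succ' z (t+1)
  -- hseq (t+2) = z * hseq (t+1) + w^(t+2)  and hseq(t+1) = w * hseq t + z^(t+1)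
  -- (z+w) hseq(t+1) - z w hseq t = z hseq(t+1) + w (hseq(t+1) - z hseq t)
  -- hseq(t+1) - z hseq t = w^(t+1)  (from hseq_succ)
  have h4 := hseq_succ z t
  calc hseq z (t+2) = z * hseq z (t+1) + (starRingEnd ℂ z)^(t+2) := h1
    _ = (z + starRingEnd ℂ z) * hseq z (t+1) - z * starRingEnd ℂ z * hseq z t := by
        rw [h4]; ring

lemma abs_hseq (z : ℂ) (r : ℝ) (hr : 0 ≤ r) (hz : ‖z‖ ≤ r) (t : ℕ) :
    ‖hseq z t‖ ≤ (t+1) * r^t := by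
  calc ‖hseq z t‖ ≤ ∑ j ∈ Finset.range (t+1),
        ‖z^j * (starRingEnd ℂ z)^(t-j)‖ := by
        exact (norm_sum_le _ _)
    _ ≤ ∑ j ∈ Finset.range (t+1), r^t := by
        refine Finset.sum_le_sum fun j hj => ?_
        rw [Finset.mem_range] at hj
        rw [norm_mul, norm_pow, norm_pow, Complex.norm_conj, ← pow_add]
        have : j + (t - j) = t := by omega
        rw [this]
        exact pow_le_pow_left₀ (norm_nonneg z) hz t
    _ = (t+1) * r^t := by
        rw [Finset.sum_const, Finset.card_range]; push_cast; ring

/-- Representation of a second-order linear recurrence in terms of power sums. -/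
lemma scalar_rep (p q : ℝ) (z : ℂ) (hzw : z + starRingEnd ℂ z = (p:ℂ))
    (hzq : z * starRingEnd ℂ z = (q:ℂ))
    (b : ℕ → ℝ) (hb : ∀ n : ℕ, b (n+2) = p * b (n+1) - q * b n) :
    ∀ n : ℕ, ((b (n+2) : ℂ)) = hseq z (n+1) * (b 1) - (q:ℂ) * hseq z n * (b 0) := by
  have key : ∀ n : ℕ,
      ((b (n+1) : ℂ)) = hseq z n * (b 1) - (q:ℂ) * (if n = 0 then 0 else hseq z (n-1)) * (b 0) ∧
      ((b (n+2) : ℂ)) = hseq z (n+1) * (b 1) - (q:ℂ) * hseq z n * (b 0) := by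
    intro n
    induction n with
    | zero =>
      constructor
      · simp [hseq_zero]
      · have := hb 0
        push_cast [this, hseq_one, hseq_zero, hzw]
        ring
    | succ n ih =>
      obtain ⟨ih1, ih2⟩ := ih
      constructor
      · simpa using ih2
      · have hrec : hseq z (n+2) = (p:ℂ) * hseq z (n+1) - (q:ℂ) * hseq z n := by
          rw [hseq_rec, hzw, hzq]
        have hb' := hb (n+1)
        have hone : hseq z (n+1) = (p:ℂ) * hseq z n
            - (q:ℂ) * (if n = 0 then 0 else hseq z (n-1)) := by
          cases n with
          | zero => simp [hseq_one, hseq_zero, ← hzw]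
          | succ m =>
            simp only [Nat.succ_ne_zero, if_false, Nat.add_sub_cancel]
            rw [hseq_rec, hzw, hzq]
        have : ((b (n+3) : ℂ)) = (p:ℂ) * (b (n+2)) - (q:ℂ) * (b (n+1)) := by
          push_cast [hb']; ring
        rw [show n+1+2 = n+3 from rfl, this, ih2, ih1, hrec, hone]
        ring
  exact fun n => (key n).2

noncomputable def Kconst (r ρ : ℝ) : ℝ :=
  2*((3/(r*(ρ/r-1)))^2 + (1/r + 3/(r^2*(ρ/r-1)))^2)

lemma Kconst_pos {r ρ : ℝ} (hr0 : 0 < r) (hrρ : r < ρ) : 0 < Kconst r ρ := by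
  have hδ : 0 < ρ/r - 1 := by
    rw [sub_pos, lt_div_iff₀ hr0, one_mul]; exact hrρ
  have h1 : 0 < 3/(r*(ρ/r-1)) := by positivity
  have h2 : 0 ≤ 1/r + 3/(r^2*(ρ/r-1)) := by positivity
  unfold Kconst; positivity

lemma scalar_bound (r ρ θ μ : ℝ) (hr0 : 0 < r) (hr1 : r ≤ 1) (hrρ : r < ρ)
    (hθ : 0 ≤ θ) (hμ : 0 ≤ μ)
    (hq : θ * μ ≤ r^2) (hp : (1+θ)*μ ≤ 2*r) (hdisc : ((1+θ)*μ)^2 ≤ 4*(θ*μ))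
    (a : ℕ → ℝ) (ha : ∀ t, 1 ≤ t → a (t+1) = μ * ((1+θ) * a t - θ * a (t-1))) :
    ∀ t, 1 ≤ t → (a (t+1))^2 + (a t)^2 ≤
      Kconst r ρ * (ρ^t)^2 * ((a 1)^2 + (a 0)^2) := by
  obtain ⟨p, hpdef⟩ : ∃ p : ℝ, p = (1+θ)*μ := ⟨_, rfl⟩
  obtain ⟨q, hqdef⟩ : ∃ q : ℝ, q = θ*μ := ⟨_, rfl⟩
  have hp2r : p ≤ 2*r := hpdef ▸ hp
  have hqr2 : q ≤ r^2 := hqdef ▸ hq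
  have hp0 : 0 ≤ p := by rw [hpdef]; positivity
  have hq0 : 0 ≤ q := by rw [hqdef]; positivity
  have hdisc2 : p^2 ≤ 4*q := by rw [hpdef, hqdef]; exact hdisc
  have ha' : ∀ t, 1 ≤ t → a (t+1) = p * a t - q * a (t-1) := by
    intro t ht
    rw [ha t ht, hpdef, hqdef]; ring
  clear ha hp hq hdisc hpdef hqdef
  have hdisc' : (p/2)^2 ≤ q := by nlinarith
  obtain ⟨z, hzdef⟩ : ∃ z : ℂ,
      z = (↑(p/2) : ℂ) + (↑(Real.sqrt (q - (p/2)^2)) : ℂ) * Complex.I := ⟨_, rfl⟩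
  have hzre : z.re = p/2 := by simp [hzdef]
  have hzim : z.im = Real.sqrt (q - (p/2)^2) := by simp [hzdef]
  have hnormSq : Complex.normSq z = q := by
    rw [Complex.normSq_apply, hzre, hzim, Real.mul_self_sqrt (by linarith)]
    ring
  have hzw : z + starRingEnd ℂ z = (p:ℂ) := by
    rw [Complex.add_conj, hzre]; push_cast; ring
  have hzq : z * starRingEnd ℂ z = (q:ℂ) := by
    rw [Complex.mul_conj, hnormSq]
  have habsz : ‖z‖ ≤ r := by
    rw [Complex.norm_def, hnormSq]
    calc Real.sqrt q ≤ Real.sqrt (r^2) := Real.sqrt_le_sqrt hqr2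
      _ = r := Real.sqrt_sq hr0.le
  -- shifted sequence
  have hb : ∀ n : ℕ, (fun n => a (n+1)) (n+2) = p * (fun n => a (n+1)) (n+1)
      - q * (fun n => a (n+1)) n := by
    intro n
    have := ha' (n+2) (by omega)
    simpa using this
  have rep := scalar_rep p q z hzw hzq (fun n => a (n+1)) hb
  have D0 : 0 ≤ |a 1| + |a 0| := by positivity
  -- |a (n+3)| ≤ (n+2) r^(n+1) (|a 2| + |a 1|)
  have habs3 : ∀ n : ℕ, |a (n+3)| ≤ ((n:ℝ)+2)*r^(n+1)*(|a 2| + |a 1|) := by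
    intro n
    have h1 : (|a (n+3)| : ℝ) = ‖(a (n+3) : ℂ)‖ := by rw [Complex.norm_real, Real.norm_eq_abs]
    have hrepn : ((a (n+3) : ℂ)) = hseq z (n+1) * (a 2) - (q:ℂ) * hseq z n * (a 1) := rep n
    rw [h1, hrepn]
    have e1 : ‖hseq z (n+1)‖ ≤ ((n:ℝ)+2)*r^(n+1) := by
      have := abs_hseq z r hr0.le habsz (n+1); push_cast at this ⊢; linarith
    have e2 : ‖hseq z n‖ ≤ ((n:ℝ)+1)*r^n := abs_hseq z r hr0.le habsz n
    have hb1 : (0:ℝ) ≤ |a 2| := abs_nonneg _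
    have hb0 : (0:ℝ) ≤ |a 1| := abs_nonneg _
    calc ‖hseq z (n+1) * (a 2 : ℂ) - (q:ℂ) * hseq z n * (a 1 : ℂ)‖
        ≤ ‖hseq z (n+1) * (a 2 : ℂ)‖ +
          ‖(q:ℂ) * hseq z n * (a 1 : ℂ)‖ := norm_sub_le _ _
      _ = ‖hseq z (n+1)‖ * |a 2| + q * ‖hseq z n‖ * |a 1| := by
          rw [norm_mul, norm_mul, norm_mul, Complex.norm_real, Complex.norm_real,
            Complex.norm_real]; simp only [Real.norm_eq_abs]; rw [abs_of_nonneg hq0]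
      _ ≤ (((n:ℝ)+2)*r^(n+1)) * |a 2| + r^2 * (((n:ℝ)+1)*r^n) * |a 1| := by
          have t1 := mul_le_mul_of_nonneg_right e1 hb1
          have t2 : q * ‖hseq z n‖ ≤ r^2 * (((n:ℝ)+1)*r^n) :=
            mul_le_mul hqr2 e2 (norm_nonneg _) (by positivity)
          have t3 := mul_le_mul_of_nonneg_right t2 hb0
          linarith
      _ ≤ ((n:ℝ)+2)*r^(n+1)*(|a 2| + |a 1|) := by
          have key : r^2 * (((n:ℝ)+1)*r^n) ≤ ((n:ℝ)+2)*r^(n+1) := by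
            have h1 : r^2 * (((n:ℝ)+1)*r^n) = (((n:ℝ)+1)*r) * r^(n+1) := by ring
            have h2 : ((n:ℝ)+1)*r ≤ (n:ℝ)+2 := by nlinarith [Nat.cast_nonneg (α := ℝ) n]
            rw [h1]
            exact mul_le_mul_of_nonneg_right h2 (by positivity)
          nlinarith [mul_le_mul_of_nonneg_right key hb0]
  have ha2 : |a 2| ≤ 2*(|a 1| + |a 0|) := by
    have h2 : a 2 = p * a 1 - q * a 0 := by simpa using ha' 1 le_rfl
    have h3 : |a 2| ≤ p * |a 1| + q * |a 0| := by
      rw [h2]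
      refine (abs_sub _ _).trans ?_
      rw [abs_mul p (a 1), abs_mul q (a 0), abs_of_nonneg hp0, abs_of_nonneg hq0]
    have t1 : p*|a 1| ≤ 2*r*|a 1| := mul_le_mul_of_nonneg_right hp2r (abs_nonneg _)
    have t2 : q*|a 0| ≤ r^2*|a 0| := mul_le_mul_of_nonneg_right hqr2 (abs_nonneg _)
    have t3 : 2*r*|a 1| ≤ 2*|a 1| :=
      mul_le_mul_of_nonneg_right (by linarith) (abs_nonneg _)
    have t4 : r^2*|a 0| ≤ 2*|a 0| :=
      mul_le_mul_of_nonneg_right (by nlinarith) (abs_nonneg _)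
    linarith
  have haball : ∀ n : ℕ, |a (n+2)| ≤ 3*((n:ℝ)+1)*r^n*(|a 1|+|a 0|) := by
    intro n
    cases n with
    | zero =>
      simp only [Nat.cast_zero, pow_zero]
      nlinarith
    | succ m =>
      have h1 := habs3 m
      have h2 : |a 2| + |a 1| ≤ 3 * (|a 1| + |a 0|) := by
        have := abs_nonneg (a 0); have := abs_nonneg (a 1); linarith
      have hnn : (0:ℝ) ≤ ((m:ℝ)+2)*r^(m+1) := by positivity
      calc |a (m+1+2)| = |a (m+3)| := by norm_num
        _ ≤ ((m:ℝ)+2)*r^(m+1)*(|a 2| + |a 1|) := h1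
        _ ≤ ((m:ℝ)+2)*r^(m+1)*(3*(|a 1| + |a 0|)) := mul_le_mul_of_nonneg_left h2 hnn
        _ = 3*(((m:ℝ)+1)+1)*r^(m+1)*(|a 1|+|a 0|) := by ring
        _ = 3*((((m+1:ℕ)):ℝ)+1)*r^((m+1))*(|a 1|+|a 0|) := by push_cast; ring
  -- Bernoulli
  obtain ⟨δ, hδdef⟩ : ∃ δ : ℝ, δ = ρ/r - 1 := ⟨_, rfl⟩
  have hδ : 0 < δ := by
    rw [hδdef, sub_pos, lt_div_iff₀ hr0, one_mul]; exact hrρ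
  have hρ0 : 0 < ρ := lt_trans hr0 hrρ
  have bern : ∀ m : ℕ, (m:ℝ) * r^m ≤ (1/δ) * ρ^m := by
    intro m
    have h1 : 1 + (m:ℝ)*δ ≤ (1+δ)^m := one_add_mul_le_pow (by linarith) m
    have h2 : (1+δ) = ρ/r := by rw [hδdef]; ring
    have h3 : (m:ℝ)*δ ≤ (ρ/r)^m := by rw [← h2]; nlinarith
    have h4 : (m:ℝ) ≤ (1/δ) * (ρ/r)^m := by
      rw [div_mul_eq_mul_div, le_div_iff₀ hδ]; linarith
    calc (m:ℝ) * r^m ≤ ((1/δ) * (ρ/r)^m) * r^m :=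
          mul_le_mul_of_nonneg_right h4 (by positivity)
      _ = (1/δ) * ρ^m := by
          rw [div_pow]; field_simp
  -- final bounds
  have bound1 : ∀ t : ℕ, 1 ≤ t → |a (t+1)| ≤ (3/(r*δ)) * ρ^t * (|a 1|+|a 0|) := by
    intro t ht
    obtain ⟨n, rfl⟩ : ∃ n, t = n + 1 := ⟨t - 1, by omega⟩
    have h1 := haball n
    have h2 : 3*((n:ℝ)+1)*r^n ≤ (3/(r*δ)) * ρ^(n+1) := by
      have hb := bern (n+1)
      have h3 : ((n:ℝ)+1)*r^(n+1) ≤ (1/δ) * ρ^(n+1) := by push_cast at hb; linarith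
      have h4 : 3*((n:ℝ)+1)*r^n = (3/r) * (((n:ℝ)+1)*r^(n+1)) := by
        field_simp; try ring
      rw [h4]
      calc (3/r) * (((n:ℝ)+1)*r^(n+1)) ≤ (3/r) * ((1/δ) * ρ^(n+1)) :=
            mul_le_mul_of_nonneg_left h3 (by positivity)
        _ = (3/(r*δ)) * ρ^(n+1) := by field_simp; try ring
    calc |a (n+1+1)| = |a (n+2)| := by norm_num
      _ ≤ 3*((n:ℝ)+1)*r^n*(|a 1|+|a 0|) := h1
      _ ≤ (3/(r*δ)) * ρ^(n+1) * (|a 1|+|a 0|) := mul_le_mul_of_nonneg_right h2 D0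
  have bound2 : ∀ t : ℕ, 1 ≤ t → |a t| ≤ (1/r + 3/(r^2*δ)) * ρ^t * (|a 1|+|a 0|) := by
    intro t ht
    obtain ⟨n, rfl⟩ : ∃ n, t = n + 1 := ⟨t - 1, by omega⟩
    cases n with
    | zero =>
      have h1 : (1:ℝ) ≤ (1/r) * ρ := by
        rw [div_mul_eq_mul_div, le_div_iff₀ hr0]; linarith
      have h2 : |a 1| ≤ |a 1| + |a 0| := by have := abs_nonneg (a 0); linarith
      have h3 : (0:ℝ) ≤ 3/(r^2*δ) * ρ := by positivity
      calc |a 1| ≤ 1 * (|a 1| + |a 0|) := by linarith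
        _ ≤ ((1/r) * ρ + 3/(r^2*δ) * ρ) * (|a 1| + |a 0|) := by
            apply mul_le_mul_of_nonneg_right _ D0; linarith
        _ = (1/r + 3/(r^2*δ)) * ρ^1 * (|a 1|+|a 0|) := by ring
    | succ m =>
      have h1 := haball m
      have h2 : 3*((m:ℝ)+1)*r^m ≤ (3/(r^2*δ)) * ρ^(m+2) := by
        have hb := bern (m+2)
        have h3 : ((m:ℝ)+1)*r^(m+2) ≤ (1/δ) * ρ^(m+2) := by
          push_cast at hb
          nlinarith [pow_nonneg hr0.le (m+2)]
        have h4 : 3*((m:ℝ)+1)*r^m = (3/r^2) * (((m:ℝ)+1)*r^(m+2)) := by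
          field_simp; try ring
        rw [h4]
        calc (3/r^2) * (((m:ℝ)+1)*r^(m+2)) ≤ (3/r^2) * ((1/δ) * ρ^(m+2)) :=
              mul_le_mul_of_nonneg_left h3 (by positivity)
          _ = (3/(r^2*δ)) * ρ^(m+2) := by field_simp; try ring
      have h5 : (0:ℝ) ≤ (1/r) * ρ^(m+2) := by positivity
      calc |a (m+1+1)| = |a (m+2)| := by norm_num
        _ ≤ 3*((m:ℝ)+1)*r^m*(|a 1|+|a 0|) := h1
        _ ≤ (3/(r^2*δ)) * ρ^(m+2) * (|a 1|+|a 0|) := mul_le_mul_of_nonneg_right h2 D0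
        _ ≤ (1/r + 3/(r^2*δ)) * ρ^(m+1+1) * (|a 1|+|a 0|) := by
            apply mul_le_mul_of_nonneg_right _ D0
            have : (m:ℕ)+1+1 = m+2 := rfl
            rw [this]; nlinarith
  intro t ht
  have b1 := bound1 t ht
  have b2 := bound2 t ht
  have hX : (0:ℝ) ≤ ρ^t * (|a 1|+|a 0|) := by positivity
  have s1 : (a (t+1))^2 ≤ (3/(r*δ))^2 * (ρ^t)^2 * (|a 1|+|a 0|)^2 := by
    have h := pow_le_pow_left₀ (abs_nonneg (a (t+1))) b1 2
    rw [sq_abs] at h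
    calc (a (t+1))^2 ≤ (3/(r*δ) * ρ^t * (|a 1|+|a 0|))^2 := h
      _ = (3/(r*δ))^2 * (ρ^t)^2 * (|a 1|+|a 0|)^2 := by ring
  have s2 : (a t)^2 ≤ (1/r + 3/(r^2*δ))^2 * (ρ^t)^2 * (|a 1|+|a 0|)^2 := by
    have h := pow_le_pow_left₀ (abs_nonneg (a t)) b2 2
    rw [sq_abs] at h
    calc (a t)^2 ≤ ((1/r + 3/(r^2*δ)) * ρ^t * (|a 1|+|a 0|))^2 := h
      _ = (1/r + 3/(r^2*δ))^2 * (ρ^t)^2 * (|a 1|+|a 0|)^2 := by ring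
  have hD2 : (|a 1|+|a 0|)^2 ≤ 2*((a 1)^2 + (a 0)^2) := by
    have e1 := sq_abs (a 1); have e2 := sq_abs (a 0)
    nlinarith [sq_nonneg (|a 1| - |a 0|)]
  have hKdef : Kconst r ρ = 2*((3/(r*δ))^2 + (1/r + 3/(r^2*δ))^2) := by
    rw [Kconst, hδdef]
  rw [hKdef]
  have hρt2 : (0:ℝ) ≤ (ρ^t)^2 := sq_nonneg _
  nlinarith [sq_nonneg (3/(r*δ)), sq_nonneg (1/r + 3/(r^2*δ)),
    mul_le_mul_of_nonneg_left hD2 (mul_nonneg (sq_nonneg (3/(r*δ))) hρt2),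
    mul_le_mul_of_nonneg_left hD2 (mul_nonneg (sq_nonneg (1/r + 3/(r^2*δ))) hρt2)]



open Matrix
open scoped BigOperators

/-- The square root of a positive semidefinite matrix, as defined in the older Mathlib
(removed since). -/
noncomputable def Matrix.PosSemidef.sqrt {n : Type*} [Fintype n] [DecidableEq n]
    {A : Matrix n n ℝ} (hA : A.PosSemidef) : Matrix n n ℝ :=
  hA.1.eigenvectorUnitary.1 * diagonal (Real.sqrt ∘ hA.1.eigenvalues) *
    (star hA.1.eigenvectorUnitary : Matrix n n ℝ)

/-- Squared Euclidean norm of a vector. -/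
noncomputable def enormSq {d : ℕ} (v : Fin d → ℝ) : ℝ := ∑ i, (v i) ^ 2

theorem Matrix.PosSemidef.posSemidef_sqrt {n : Type*} [Fintype n] [DecidableEq n]
    {A : Matrix n n ℝ} (hA : A.PosSemidef) : hA.sqrt.PosSemidef := by
  unfold Matrix.PosSemidef.sqrt
  have hD : (diagonal (Real.sqrt ∘ hA.1.eigenvalues)).PosSemidef :=
    posSemidef_diagonal_iff.mpr fun i => Real.sqrt_nonneg _
  exact hD.mul_mul_conjTranspose_same (hA.1.eigenvectorUnitary : Matrix n n ℝ)

theorem Matrix.PosSemidef.sqrt_mul_self {n : Type*} [Fintype n] [DecidableEq n]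
    {A : Matrix n n ℝ} (hA : A.PosSemidef) : hA.sqrt * hA.sqrt = A := by
  have hUU : (star hA.1.eigenvectorUnitary : Matrix n n ℝ) *
      (hA.1.eigenvectorUnitary : Matrix n n ℝ) = 1 := Unitary.coe_star_mul_self _
  have hspec := hA.1.spectral_theorem
  rw [Unitary.conjStarAlgAut_apply] at hspec
  have hd : diagonal (Real.sqrt ∘ hA.1.eigenvalues) * diagonal (Real.sqrt ∘ hA.1.eigenvalues)
      = diagonal (RCLike.ofReal ∘ hA.1.eigenvalues) := by
    rw [diagonal_mul_diagonal]; congr 1; funext i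
    simp only [Function.comp_apply]
    rw [Real.mul_self_sqrt (hA.eigenvalues_nonneg i)]; rfl
  unfold Matrix.PosSemidef.sqrt
  conv_rhs => rw [hspec]
  simp only [Matrix.mul_assoc]
  rw [← Matrix.mul_assoc (star hA.1.eigenvectorUnitary : Matrix n n ℝ), hUU, Matrix.one_mul,
    ← Matrix.mul_assoc (diagonal _), hd]

/-- Accelerated approximate Newton on a quadratic `F(x) = (1/2)xᵀAx − bᵀx` with an
approximate Hessian `H` of quality `π` (i.e. `(1−π)A⁻¹ ⪯ H⁻¹ ⪯ A⁻¹`) and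
`θ = (1 − √(1−π))/(1 + √(1−π))` converges linearly at any rate
`ρ ∈ (1 − √(1−π), 1)` in the `A^{-1/2}`-transformed gradient norm. -/
theorem accelerated_approximate_newton_quadratic_convergence (d : ℕ)
    (A : Matrix (Fin d) (Fin d) ℝ) (hA : A.PosDef)
    (b : Fin d → ℝ)
    (gradF : (Fin d → ℝ) → (Fin d → ℝ)) (hgrad : ∀ v, gradF v = A.mulVec v - b)
    (π : ℝ) (hπ0 : 0 < π) (hπ1 : π < 1)
    (H : Matrix (Fin d) (Fin d) ℝ) (hH : H.PosDef) (hHsymm : H.IsHermitian)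
    (hup : (A⁻¹ - H⁻¹).PosSemidef)
    (hlow : (H⁻¹ - (1 - π) • A⁻¹).PosSemidef)
    (θ : ℝ) (hθ : θ = (1 - Real.sqrt (1 - π)) / (1 + Real.sqrt (1 - π)))
    (x : ℕ → Fin d → ℝ)
    (hrec : ∀ t : ℕ, 1 ≤ t →
      x (t + 1) = ((1 + θ) • x t - θ • x (t - 1)) -
        H⁻¹.mulVec (gradF ((1 + θ) • x t - θ • x (t - 1)))) :
    ∀ ρ : ℝ, 1 - Real.sqrt (1 - π) < ρ → ρ < 1 →
      ∃ C : ℝ, 0 < C ∧ ∀ t : ℕ, 1 ≤ t →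
        Real.sqrt
            (enormSq ((hA.posSemidef.sqrt)⁻¹.mulVec (gradF (x (t + 1)))) +
              enormSq ((hA.posSemidef.sqrt)⁻¹.mulVec (gradF (x t)))) ≤
          C * ρ ^ t *
            Real.sqrt
              (enormSq ((hA.posSemidef.sqrt)⁻¹.mulVec (gradF (x 1))) +
                enormSq ((hA.posSemidef.sqrt)⁻¹.mulVec (gradF (x 0)))) := by
  intro ρ hρr hρ1
  -- scalar identities
  have h1π : 0 < 1 - π := by linarith
  obtain ⟨s, hsdef⟩ : ∃ s : ℝ, s = Real.sqrt (1 - π) := ⟨_, rfl⟩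
  have hs0 : 0 < s := hsdef ▸ Real.sqrt_pos.mpr h1π
  have hs2 : s^2 = 1 - π := by rw [hsdef]; exact Real.sq_sqrt h1π.le
  have hs1 : s < 1 := by nlinarith
  obtain ⟨r, hrdef⟩ : ∃ r : ℝ, r = 1 - s := ⟨_, rfl⟩
  have hr0 : 0 < r := by rw [hrdef]; linarith
  have hr1 : r ≤ 1 := by rw [hrdef]; linarith
  have hrρ : r < ρ := by rw [hrdef, hsdef]; exact hρr
  have hθs : θ = (1 - s) / (1 + s) := by rw [hθ, hsdef]
  have hθ0 : 0 ≤ θ := by rw [hθs]; apply div_nonneg <;> linarith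
  have h1s : (0:ℝ) < 1 + s := by linarith
  have id1 : θ * π = r^2 := by
    rw [hθs, hrdef]; field_simp; nlinarith
  have id2 : (1+θ) * π = 2*r := by
    rw [hθs, hrdef]; field_simp; nlinarith
  have id3 : (1+θ)^2 * π = 4*θ := by
    rw [hθs]; field_simp; nlinarith
  -- matrix setup
  have hS : (hA.posSemidef.sqrt).PosSemidef := hA.posSemidef.posSemidef_sqrt
  obtain ⟨S, hSdef⟩ : ∃ S : Matrix (Fin d) (Fin d) ℝ, S = hA.posSemidef.sqrt := ⟨_, rfl⟩
  rw [← hSdef] at hS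
  have hSmul : S * S = A := by rw [hSdef]; exact hA.posSemidef.sqrt_mul_self
  have hSH : Sᴴ = S := hS.1
  have hdetA : IsUnit A.det := (Matrix.isUnit_iff_isUnit_det _).mp hA.isUnit
  have hdetS : IsUnit S.det := by
    have h : S.det * S.det = A.det := by rw [← Matrix.det_mul, hSmul]
    exact isUnit_of_mul_isUnit_left (h ▸ hdetA)
  have hSS : S⁻¹ * S = 1 := Matrix.nonsing_inv_mul S hdetS
  have hSS' : S * S⁻¹ = 1 := Matrix.mul_nonsing_inv S hdetS
  have hSiA : S⁻¹ * A = S := by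
    rw [← hSmul, ← Matrix.mul_assoc, hSS, Matrix.one_mul]
  have hAinv : A⁻¹ = S⁻¹ * S⁻¹ := by rw [← hSmul, Matrix.mul_inv_rev]
  have hSAS : S * A⁻¹ * S = 1 := by
    rw [hAinv]
    simp only [Matrix.mul_assoc, hSS]
    rw [Matrix.mul_one, hSS']
  obtain ⟨M, hMdef⟩ : ∃ M : Matrix (Fin d) (Fin d) ℝ, M = 1 - S * H⁻¹ * S := ⟨_, rfl⟩
  have hMpsd : M.PosSemidef := by
    have h := hup.mul_mul_conjTranspose_same S
    rw [hSH] at h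
    have e : S * (A⁻¹ - H⁻¹) * S = M := by
      rw [hMdef, Matrix.mul_sub, Matrix.sub_mul, hSAS]
    rwa [e] at h
  have hMub : ((π • (1:Matrix (Fin d) (Fin d) ℝ)) - M).PosSemidef := by
    have h := hlow.mul_mul_conjTranspose_same S
    rw [hSH] at h
    have e : S * (H⁻¹ - (1-π) • A⁻¹) * S = (π • (1:Matrix (Fin d) (Fin d) ℝ)) - M := by
      rw [hMdef, Matrix.mul_sub, Matrix.sub_mul, Matrix.mul_smul, Matrix.smul_mul, hSAS]
      have : (π • (1:Matrix (Fin d) (Fin d) ℝ)) = 1 - (1-π) • 1 := by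
        rw [show (π:ℝ) = 1 - (1-π) by ring, sub_smul, one_smul]
        simp
      rw [this]
      abel
    rwa [e] at h
  have hM : M.IsHermitian := by
    rw [hMdef]
    have h1 : (S * H⁻¹ * S).IsHermitian := by
      have h2 := Matrix.isHermitian_mul_mul_conjTranspose S (hH.inv).1
      rwa [hSH] at h2
    exact Matrix.isHermitian_one.sub h1
  -- the transformed gradient sequence
  obtain ⟨g, hgdef⟩ : ∃ g : ℕ → Fin d → ℝ,
      g = fun t => (hA.posSemidef.sqrt)⁻¹.mulVec (gradF (x t)) := ⟨_, rfl⟩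
  have hg : ∀ t, g t = S⁻¹ *ᵥ (A *ᵥ x t - b) := by
    intro t; rw [hgdef]; simp only [hgrad, hSdef]
  have hgrec : ∀ t, 1 ≤ t → g (t+1) = M *ᵥ ((1+θ) • g t - θ • g (t-1)) := by
    intro t ht
    obtain ⟨y, hydef⟩ : ∃ y : Fin d → ℝ, y = (1+θ) • x t - θ • x (t-1) := ⟨_, rfl⟩
    have hx : x (t+1) = y - H⁻¹ *ᵥ (A *ᵥ y - b) := by
      rw [hydef, hrec t ht, hgrad]
    have hgy : S⁻¹ *ᵥ (A *ᵥ y - b) = (1+θ) • g t - θ • g (t-1) := by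
      have e1 : A *ᵥ y - b = (1+θ) • (A *ᵥ x t - b) - θ • (A *ᵥ x (t-1) - b) := by
        rw [hydef, Matrix.mulVec_sub, Matrix.mulVec_smul, Matrix.mulVec_smul]
        module
      rw [e1, Matrix.mulVec_sub, Matrix.mulVec_smul, Matrix.mulVec_smul,
        ← hg, ← hg]
    have hu : A *ᵥ y - b = S *ᵥ (S⁻¹ *ᵥ (A *ᵥ y - b)) := by
      rw [Matrix.mulVec_mulVec, hSS', Matrix.one_mulVec]
    have e2 : A *ᵥ x (t+1) - b = (A *ᵥ y - b) - A *ᵥ (H⁻¹ *ᵥ (A *ᵥ y - b)) := by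
      rw [hx, Matrix.mulVec_sub]
      abel
    rw [hg (t+1), e2, Matrix.mulVec_sub]
    have e3 : S⁻¹ *ᵥ (A *ᵥ (H⁻¹ *ᵥ (A *ᵥ y - b)))
        = (S * H⁻¹ * S) *ᵥ (S⁻¹ *ᵥ (A *ᵥ y - b)) := by
      conv_lhs => rw [hu]
      rw [Matrix.mulVec_mulVec, Matrix.mulVec_mulVec, Matrix.mulVec_mulVec,
        Matrix.mulVec_mulVec, Matrix.mulVec_mulVec]
      congr 1
      rw [hSiA]
    rw [e3, hgy, hMdef, Matrix.sub_mulVec, Matrix.one_mulVec, ← hgy]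
  -- spectral decomposition of M
  obtain ⟨U, hUdef⟩ : ∃ U : Matrix (Fin d) (Fin d) ℝ,
      U = (hM.eigenvectorUnitary : Matrix (Fin d) (Fin d) ℝ) := ⟨_, rfl⟩
  obtain ⟨μ, hμdef⟩ : ∃ μ : Fin d → ℝ, μ = hM.eigenvalues := ⟨_, rfl⟩
  have hofReal : (RCLike.ofReal ∘ hM.eigenvalues : Fin d → ℝ) = μ := by
    rw [hμdef]; funext i; simp [RCLike.ofReal]
  have hspec : star U * M * U = Matrix.diagonal μ := by
    rw [hUdef, ← hofReal]
    exact (Unitary.conjStarAlgAut_star_apply (S := ℝ) _ _).symm.trans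
      hM.conjStarAlgAut_star_eigenvectorUnitary
  have hUU : star U * U = 1 := by rw [hUdef]; exact hM.eigenvectorUnitary.2.1
  have hUU' : U * star U = 1 := by rw [hUdef]; exact hM.eigenvectorUnitary.2.2
  have hdiagM : star U * M = Matrix.diagonal μ * star U := by
    have h := congrArg (fun X => X * star U) hspec
    simp only [Matrix.mul_assoc] at h
    rwa [hUU', Matrix.mul_one] at h
  -- eigenvalue bounds
  have hμ0 : ∀ i, 0 ≤ μ i := by
    intro i
    have := hMpsd.eigenvalues_nonneg i
    rwa [hμdef]
  have hμπ : ∀ i, μ i ≤ π := by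
    intro i
    have h := hMub.conjTranspose_mul_mul_same U
    have e : Uᴴ * (π • (1:Matrix (Fin d) (Fin d) ℝ) - M) * U
        = Matrix.diagonal (fun i => π - μ i) := by
      rw [← Matrix.star_eq_conjTranspose, Matrix.mul_sub, Matrix.sub_mul,
        Matrix.mul_smul, Matrix.smul_mul, Matrix.mul_one, hUU, hspec]
      ext i j
      rcases eq_or_ne i j with hij|hij
      · subst hij
        simp [Matrix.sub_apply, Matrix.smul_apply, Matrix.one_apply_eq,
          Matrix.diagonal_apply_eq]
      · simp [Matrix.sub_apply, Matrix.smul_apply, Matrix.one_apply_ne hij,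
          Matrix.diagonal_apply_ne _ hij]
    rw [e] at h
    have := Matrix.posSemidef_diagonal_iff.mp h i
    linarith
  -- coordinates in the eigenbasis
  obtain ⟨c, hcdef⟩ : ∃ c : ℕ → Fin d → ℝ, c = fun t => (star U) *ᵥ (g t) := ⟨_, rfl⟩
  have hcrec : ∀ t, 1 ≤ t → ∀ i, c (t+1) i = μ i * ((1+θ) * c t i - θ * c (t-1) i) := by
    intro t ht i
    have h1 : c (t+1) = Matrix.diagonal μ *ᵥ ((1+θ) • c t - θ • c (t-1)) := by
      rw [hcdef]
      simp only []
      rw [hgrec t ht, Matrix.mulVec_mulVec, hdiagM, ← Matrix.mulVec_mulVec,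
        Matrix.mulVec_sub, Matrix.mulVec_smul, Matrix.mulVec_smul]
    rw [h1, Matrix.mulVec_diagonal]
    simp [Pi.sub_apply, Pi.smul_apply, smul_eq_mul]
  -- Parseval
  have hpars : ∀ v : Fin d → ℝ, ∑ i, ((star U *ᵥ v) i)^2 = ∑ i, (v i)^2 := by
    intro v
    have hdot : ∀ w : Fin d → ℝ, ∑ i, (w i)^2 = w ⬝ᵥ w := by
      intro w; simp [dotProduct, pow_two]
    rw [hdot, hdot, Matrix.dotProduct_mulVec]
    have hT2 : star U = Uᵀ := by
      rw [Matrix.star_eq_conjTranspose, Matrix.conjTranspose_eq_transpose_of_trivial]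
    have h3 : star U *ᵥ v = v ᵥ* U := by
      rw [hT2, Matrix.mulVec_transpose]
    rw [h3, Matrix.vecMul_vecMul, hUU', Matrix.vecMul_one]
  have hparseval : ∀ t, enormSq (g t) = ∑ i, (c t i)^2 := by
    intro t
    simp only [enormSq, hcdef]
    exact (hpars (g t)).symm
  -- assemble
  have hKpos := Kconst_pos hr0 hrρ
  have key : ∀ t, 1 ≤ t → enormSq (g (t+1)) + enormSq (g t) ≤
      Kconst r ρ * (ρ^t)^2 * (enormSq (g 1) + enormSq (g 0)) := by
    intro t ht
    have hco : ∀ i, (c (t+1) i)^2 + (c t i)^2 ≤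
        Kconst r ρ * (ρ^t)^2 * ((c 1 i)^2 + (c 0 i)^2) := by
      intro i
      refine scalar_bound r ρ θ (μ i) hr0 hr1 hrρ hθ0 (hμ0 i) ?_ ?_ ?_ (fun n => c n i) ?_ t ht
      · calc θ * μ i ≤ θ * π := mul_le_mul_of_nonneg_left (hμπ i) hθ0
          _ = r^2 := id1
      · calc (1+θ) * μ i ≤ (1+θ) * π := mul_le_mul_of_nonneg_left (hμπ i) (by linarith)
          _ = 2*r := id2
      · have h1 : (1+θ)^2 * μ i ≤ (1+θ)^2 * π :=
          mul_le_mul_of_nonneg_left (hμπ i) (by positivity)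
        calc ((1+θ) * μ i)^2 = ((1+θ)^2 * μ i) * μ i := by ring
          _ ≤ ((1+θ)^2 * π) * μ i := mul_le_mul_of_nonneg_right h1 (hμ0 i)
          _ = 4*(θ * μ i) := by rw [id3]; ring
      · intro n hn; exact hcrec n hn i
    calc enormSq (g (t+1)) + enormSq (g t) = ∑ i, ((c (t+1) i)^2 + (c t i)^2) := by
          rw [hparseval, hparseval, ← Finset.sum_add_distrib]
      _ ≤ ∑ i, Kconst r ρ * (ρ^t)^2 * ((c 1 i)^2 + (c 0 i)^2) :=
          Finset.sum_le_sum (fun i _ => hco i)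
      _ = Kconst r ρ * (ρ^t)^2 * (enormSq (g 1) + enormSq (g 0)) := by
          rw [← Finset.mul_sum, Finset.sum_add_distrib, hparseval, hparseval]
  refine ⟨Real.sqrt (Kconst r ρ), Real.sqrt_pos.mpr hKpos, ?_⟩
  intro t ht
  have hk := key t ht
  have hgoal : ∀ u : ℕ, (hA.posSemidef.sqrt)⁻¹.mulVec (gradF (x u)) = g u := by
    intro u; rw [hgdef]
  rw [hgoal, hgoal, hgoal, hgoal]
  have hρ0 : 0 < ρ := lt_trans hr0 hrρ
  calc Real.sqrt (enormSq (g (t+1)) + enormSq (g t))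
      ≤ Real.sqrt (Kconst r ρ * (ρ^t)^2 * (enormSq (g 1) + enormSq (g 0))) :=
        Real.sqrt_le_sqrt hk
    _ = Real.sqrt (Kconst r ρ) * ρ^t * Real.sqrt (enormSq (g 1) + enormSq (g 0)) := by
        rw [Real.sqrt_mul (by positivity), Real.sqrt_mul hKpos.le,
          Real.sqrt_sq (by positivity)]
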